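/- Let ≤_{T'} ⊆ ≤_T be preorders on a set X such that the identity-on-objects map T' → T is admissible, and let ≤_Q be a preorder on X with ≤_Q ⊆ ≤_{T/T'} such that the identity-on-objects map Q → T/T' is admissible. Then there exists a unique preorder ≤_P on X with ≤_{T'} ⊆ ≤_P ⊆ ≤_T such that the identity-on-objects maps T' → P and P → T are admissible and P/T' = Q. -/

import Mathlib

section Defs

variable {α β : Type*}

/-- `f` is monotone from the relation `r` to the relation `s`. -/
def Mono (r : α → α → Prop) (s : β → β → Prop) (f : α → β) : Prop :=
  ∀ a b, r a b → s (f a) (f b)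

/-- A monotone map `f` is convex if whenever `f x ≤ w ≤ f y` there is a unique
`p` with `x ≤ p ≤ y` and `f p = w`. -/
def ConvexMap (r : α → α → Prop) (s : β → β → Prop) (f : α → β) : Prop :=
  Mono r s f ∧ ∀ x y w, s (f x) w → s w (f y) → ∃! p, r x p ∧ r p y ∧ f p = w

/-- A subset `S` is connected (w.r.t. the order relation `r`) if any two of its
elements are joined by a finite zigzag of comparable pairs lying in `S`. -/
def ConnectedIn (r : α → α → Prop) (S : Set α) : Prop :=
  ∀ x ∈ S, ∀ y ∈ S,
    Relation.ReflTransGen (fun a b => a ∈ S ∧ b ∈ S ∧ (r a b ∨ r b a)) x y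

/-- A subset `S` is order-convex w.r.t. `r`. -/
def OrdConvexIn (r : α → α → Prop) (S : Set α) : Prop :=
  ∀ x ∈ S, ∀ y ∈ S, ∀ z, r x z → r z y → z ∈ S

/-- The strict relation associated to `r`. -/
def LtRel (r : α → α → Prop) (a b : α) : Prop := r a b ∧ ¬ r b a

/-- `b` covers `a` w.r.t. `r`. -/
def CovRel (r : α → α → Prop) (a b : α) : Prop :=
  LtRel r a b ∧ ∀ c, ¬ (LtRel r a c ∧ LtRel r c b)

/-- A contraction: a monotone surjection with connected convex fibres that lifts covers. -/
def IsContraction (r : α → α → Prop) (s : β → β → Prop) (f : α → β) : Prop :=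
  Mono r s f ∧ Function.Surjective f ∧
  (∀ q, ConnectedIn r (f ⁻¹' {q}) ∧ OrdConvexIn r (f ⁻¹' {q})) ∧
  ∀ q q', CovRel s q q' → ∃ p p', CovRel r p p' ∧ f p = q ∧ f p' = q'

/-- A collapse map: a monotone surjection which partially reflects the strict order. -/
def IsCollapse (r : α → α → Prop) (s : β → β → Prop) (f : α → β) : Prop :=
  Mono r s f ∧ Function.Surjective f ∧ ∀ x y, LtRel s (f x) (f y) → LtRel r x y

/-- `r` is a partial order relation. -/
def IsPartialOrderRel (r : α → α → Prop) : Prop :=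
  (∀ a, r a a) ∧ (∀ a b c, r a b → r b c → r a c) ∧ (∀ a b, r a b → r b a → a = b)

/-- `r` is a preorder relation. -/
def IsPreorderRel (r : α → α → Prop) : Prop :=
  (∀ a, r a a) ∧ ∀ a b c, r a b → r b c → r a c

/-- The symmetrization `x ∼ y` of a preorder relation. -/
def Sim (r : α → α → Prop) (x y : α) : Prop := r x y ∧ r y x

/-- The quotient preorder `T/T'`: the transitive closure of
`x R y ⟺ (x ≤_T y or y ≤_{T'} x)`. -/
def QuotRel (r r' : α → α → Prop) : α → α → Prop :=
  Relation.TransGen (fun x y => r x y ∨ r' y x)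

/-- The identity-on-objects monotone map of preorders `T' → T` is admissible. -/
def Admissible (r' r : α → α → Prop) : Prop :=
  (∀ x y, r' x y → r x y) ∧
  (∀ Y : Set α, ConnectedIn r' Y → ∀ x ∈ Y, ∀ y ∈ Y, (r x y ↔ r' x y)) ∧
  (∀ x y, Sim (QuotRel r r') x y ↔ Sim (QuotRel r' r') x y)

/-- The identity-on-objects monotone map of preorders `T → V` is a contraction of preorders. -/
def PreContraction (r v : α → α → Prop) : Prop :=
  (∀ x y, r x y → v x y) ∧
  (∀ x, ConnectedIn r {y | Sim v x y}) ∧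
  ∀ a a', CovRel v a a' → ∃ t t', CovRel r t t' ∧ t = a ∧ t' = a'

/-- The setoid on `α` whose relation is the symmetrization of the preorder relation `r`. -/
def simSetoid (r : α → α → Prop) (h : IsPreorderRel r) : Setoid α where
  r := Sim r
  iseqv := ⟨fun x => ⟨h.1 x, h.1 x⟩, fun hxy => ⟨hxy.2, hxy.1⟩,
    fun h1 h2 => ⟨h.2 _ _ _ h1.1 h2.1, h.2 _ _ _ h2.2 h1.2⟩⟩

/-- The partial order relation on the posetification (antisymmetrization) of a preorder. -/
def posetLe (r : α → α → Prop) (h : IsPreorderRel r) :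
    Quotient (simSetoid r h) → Quotient (simSetoid r h) → Prop :=
  Quotient.lift₂ r (fun _ _ _ _ hx hy => propext
    ⟨fun hr => h.2 _ _ _ (h.2 _ _ _ hx.2 hr) hy.1,
     fun hr => h.2 _ _ _ (h.2 _ _ _ hx.1 hr) hy.2⟩)

/-- A tree: a poset with a greatest element in which every interval is linearly ordered. -/
def IsTreeRel (r : α → α → Prop) : Prop :=
  (∃ t, ∀ p, r p t) ∧
  ∀ p p' z w, r p z → r z p' → r p w → r w p' → (r z w ∨ r w z)

/-- The connected component of `p` w.r.t. the order relation `r`. -/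
def component (r : α → α → Prop) (p : α) : Set α :=
  {q | Relation.ReflTransGen (fun a b => r a b ∨ r b a) p q}

/-- A forest: a poset each of whose connected components is a tree. -/
def IsForestRel (r : α → α → Prop) : Prop :=
  ∀ p, IsTreeRel (fun a b : component r p => r a.1 b.1)

end Defs

section MyAux

variable {X : Type*}

private theorem myConnR_symm {r : X → X → Prop} {x y : X}
    (h : Relation.ReflTransGen (fun a b => r a b ∨ r b a) x y) :
    Relation.ReflTransGen (fun a b => r a b ∨ r b a) y x :=
  (@Relation.ReflTransGen.symmetric _ _ ⟨fun _ _ h => Or.symm h⟩).symm _ _ h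

private theorem myRtgToTg {s : X → X → Prop} (hs : ∀ a, s a a) {x y : X}
    (h : Relation.ReflTransGen s x y) : Relation.TransGen s x y := by
  rcases Relation.reflTransGen_iff_eq_or_transGen.mp h with rfl | h
  · exact Relation.TransGen.single (hs _)
  · exact h

private theorem myConnectedIn_component (r : X → X → Prop) (x : X) :
    ConnectedIn r {z | Relation.ReflTransGen (fun a b => r a b ∨ r b a) x z} := by
  set S := {z | Relation.ReflTransGen (fun a b => r a b ∨ r b a) x z} with hS
  have hx : ∀ w, w ∈ S →
      Relation.ReflTransGen (fun a b => a ∈ S ∧ b ∈ S ∧ (r a b ∨ r b a)) x w := by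
    intro w hw
    induction hw with
    | refl => exact Relation.ReflTransGen.refl
    | tail hab hbc ih =>
      exact ih.tail ⟨hab, hab.tail hbc, hbc⟩
  intro u hu v hv
  have hsym : Symmetric (fun a b => a ∈ S ∧ b ∈ S ∧ (r a b ∨ r b a)) :=
    fun a b h => ⟨h.2.1, h.1, Or.symm h.2.2⟩
  exact ((@Relation.ReflTransGen.symmetric _ _ ⟨fun _ _ h => hsym h⟩).symm _ _ (hx u hu)).trans (hx v hv)

private theorem mySimQuotSelf {r : X → X → Prop} (hr : ∀ a, r a a) {x y : X} :
    Sim (QuotRel r r) x y ↔ Relation.ReflTransGen (fun a b => r a b ∨ r b a) x y := by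
  constructor
  · exact fun h => h.1.to_reflTransGen
  · intro h
    induction h with
    | refl =>
      exact ⟨Relation.TransGen.single (Or.inl (hr _)),
             Relation.TransGen.single (Or.inl (hr _))⟩
    | tail _hab hbc ih =>
      exact ⟨ih.1.trans (Relation.TransGen.single hbc),
             Relation.TransGen.head (Or.symm hbc) ih.2⟩

end MyAux

/-- given admissible `T' → T` and admissible `Q → T/T'`, there is a
unique intermediate preorder `P` with `T' → P` and `P → T` admissible and `P/T' = Q`. -/
theorem unique_intermediate_preorder {X : Type*} (rT' rT rQ : X → X → Prop)
    (hT' : IsPreorderRel rT') (hT : IsPreorderRel rT) (hQ : IsPreorderRel rQ)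
    (hsub : ∀ x y, rT' x y → rT x y)
    (hadm : Admissible rT' rT)
    (hQsub : ∀ x y, rQ x y → QuotRel rT rT' x y)
    (hQadm : Admissible rQ (QuotRel rT rT')) :
    ∃! rP : X → X → Prop,
      IsPreorderRel rP ∧
      (∀ x y, rT' x y → rP x y) ∧ (∀ x y, rP x y → rT x y) ∧
      Admissible rT' rP ∧ Admissible rP rT ∧
      ∀ x y, QuotRel rP rT' x y ↔ rQ x y := by
  -- basic helpers
  have toTG : ∀ {u v : X}, Relation.ReflTransGen (fun a b => rT a b ∨ rT' b a) u v →
      Relation.TransGen (fun a b => rT a b ∨ rT' b a) u v :=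
    fun h => myRtgToTg (s := fun a b => rT a b ∨ rT' b a) (fun c => Or.inl (hT.1 c)) h
  have A2 : ∀ x y, Sim (QuotRel rT rT') x y ↔
      Relation.ReflTransGen (fun a b => rT' a b ∨ rT' b a) x y :=
    fun x y => (hadm.2.2 x y).trans (mySimQuotSelf hT'.1)
  have B1 : ∀ x y, QuotRel rT rT' x y →
      Relation.ReflTransGen (fun a b => rQ a b ∨ rQ b a) x y → rQ x y := by
    intro x y hxy hconn
    exact (hQadm.2.1 _ (myConnectedIn_component rQ x) x .refl y hconn).mp hxy
  have B2 : ∀ x y, Sim (QuotRel (QuotRel rT rT') rQ) x y ↔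
      Relation.ReflTransGen (fun a b => rQ a b ∨ rQ b a) x y :=
    fun x y => (hQadm.2.2 x y).trans (mySimQuotSelf hQ.1)
  have L5 : ∀ x y, rT' x y → Sim (QuotRel rT rT') x y := fun x y h =>
    ⟨Relation.TransGen.single (Or.inl (hsub _ _ h)), Relation.TransGen.single (Or.inr h)⟩
  have L6 : ∀ x y, Sim (QuotRel rT rT') x y →
      Relation.ReflTransGen (fun a b => rQ a b ∨ rQ b a) x y := fun x y h =>
    (B2 x y).mp ⟨Relation.TransGen.single (Or.inl h.1), Relation.TransGen.single (Or.inl h.2)⟩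
  have D : ∀ x y, rT' x y → rQ x y := fun x y h =>
    B1 x y (Relation.TransGen.single (Or.inl (hsub _ _ h))) (L6 x y (L5 x y h))
  have D' : ∀ x y, rT' x y → rQ y x := fun x y h =>
    B1 y x (Relation.TransGen.single (Or.inr h)) (myConnR_symm (L6 x y (L5 x y h)))
  -- the candidate preorder
  have PQ : ∀ x y, QuotRel (fun a b => rT a b ∧ rQ a b) rT' x y → rQ x y := by
    intro x y h
    induction h with
    | single h => rcases h with h | h
                  · exact h.2
                  · exact D' _ _ h
    | tail _ hbc ih => rcases hbc with h | h
                       · exact hQ.2 _ _ _ ih h.2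
                       · exact hQ.2 _ _ _ ih (D' _ _ h)
  have key : ∀ x y, rQ x y → QuotRel (fun a b => rT a b ∧ rQ a b) rT' x y := by
    intro x y hxy
    have hTq : Relation.TransGen (fun a b => rT a b ∨ rT' b a) x y := hQsub x y hxy
    have keypair : ∀ a b, rT a b →
        Relation.ReflTransGen (fun a b => rT a b ∨ rT' b a) x a →
        Relation.ReflTransGen (fun a b => rT a b ∨ rT' b a) b y → rT a b ∧ rQ a b := by
      intro a b hab hxa hby
      have tgay : Relation.TransGen (fun a b => rT a b ∨ rT' b a) a y :=
        Relation.TransGen.head' (Or.inl hab) hby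
      have bigxa : QuotRel (QuotRel rT rT') rQ x a :=
        Relation.TransGen.single (Or.inl (toTG hxa))
      have bigax : QuotRel (QuotRel rT rT') rQ a x :=
        Relation.TransGen.head (Or.inl tgay) (Relation.TransGen.single (Or.inr hxy))
      have connxa := (B2 x a).mp ⟨bigxa, bigax⟩
      have bigxb : QuotRel (QuotRel rT rT') rQ x b :=
        Relation.TransGen.single (Or.inl (toTG (hxa.tail (Or.inl hab))))
      have bigbx : QuotRel (QuotRel rT rT') rQ b x :=
        Relation.TransGen.head (Or.inl (toTG hby)) (Relation.TransGen.single (Or.inr hxy))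
      have connxb := (B2 x b).mp ⟨bigxb, bigbx⟩
      exact ⟨hab, B1 a b (Relation.TransGen.single (Or.inl hab))
        ((myConnR_symm connxa).trans connxb)⟩
    have main : ∀ a (h : Relation.TransGen (fun a b => rT a b ∨ rT' b a) a y),
        Relation.ReflTransGen (fun a b => rT a b ∨ rT' b a) x a →
        Relation.TransGen (fun u v => (rT u v ∧ rQ u v) ∨ rT' v u) a y := by
      intro a h
      induction h using Relation.TransGen.head_induction_on with
      | single h =>
        intro hxa
        rcases h with h | h
        · exact Relation.TransGen.single (Or.inl (keypair _ _ h hxa .refl))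
        · exact Relation.TransGen.single (Or.inr h)
      | head h' h ihr =>
        intro hxa
        rcases h' with h1 | h1
        · exact Relation.TransGen.head (Or.inl (keypair _ _ h1 hxa h.to_reflTransGen))
            (ihr (hxa.tail (Or.inl h1)))
        · exact Relation.TransGen.head (Or.inr h1) (ihr (hxa.tail (Or.inr h1)))
    exact main x hTq .refl
  have connQtoP : ∀ u v, Relation.ReflTransGen (fun a b => rQ a b ∨ rQ b a) u v →
      Relation.ReflTransGen
        (fun a b => (rT a b ∧ rQ a b) ∨ (rT b a ∧ rQ b a)) u v := by
    have conv : ∀ a b, rQ a b → Relation.ReflTransGen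
        (fun a b => (rT a b ∧ rQ a b) ∨ (rT b a ∧ rQ b a)) a b := by
      intro a b hab
      refine Relation.TransGen.to_reflTransGen (Relation.TransGen.mono ?_ _ _ (key a b hab))
      rintro c d (h | h)
      · exact Or.inl h
      · exact Or.inr ⟨hsub _ _ h, D _ _ h⟩
    intro u v h
    induction h with
    | refl => exact .refl
    | tail _ hbc ih =>
      rcases hbc with h | h
      · exact ih.trans (conv _ _ h)
      · exact ih.trans (myConnR_symm (r := fun a b => rT a b ∧ rQ a b) (conv _ _ h))
  have rPrefl : ∀ a, rT a a ∧ rQ a a := fun a => ⟨hT.1 a, hQ.1 a⟩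
  refine ⟨fun a b => rT a b ∧ rQ a b,
    ⟨⟨rPrefl, fun a b c h1 h2 => ⟨hT.2 _ _ _ h1.1 h2.1, hQ.2 _ _ _ h1.2 h2.2⟩⟩,
     fun x y h => ⟨hsub x y h, D x y h⟩,
     fun x y h => h.1, ?_, ?_, fun x y => ⟨PQ x y, key x y⟩⟩, ?_⟩
  · -- Admissible rT' rP
    refine ⟨fun x y h => ⟨hsub x y h, D x y h⟩, ?_, ?_⟩
    · intro Y hY x hx y hy
      constructor
      · exact fun h => (hadm.2.1 Y hY x hx y hy).mp h.1
      · exact fun h => ⟨(hadm.2.1 Y hY x hx y hy).mpr h, D x y h⟩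
    · intro x y
      have hQside : Sim rQ x y ↔ Sim (QuotRel rT' rT') x y := by
        constructor
        · intro h
          have hT'conn := (A2 x y).mp ⟨hQsub _ _ h.1, hQsub _ _ h.2⟩
          exact (mySimQuotSelf hT'.1).mpr hT'conn
        · intro h
          have hsim : Sim (QuotRel rT rT') x y := (A2 x y).mpr ((mySimQuotSelf hT'.1).mp h)
          exact ⟨B1 x y hsim.1 (L6 x y hsim), B1 y x hsim.2 (myConnR_symm (L6 x y hsim))⟩
      refine Iff.trans ?_ hQside
      exact ⟨fun h => ⟨PQ x y h.1, PQ y x h.2⟩, fun h => ⟨key x y h.1, key y x h.2⟩⟩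
  · -- Admissible rP rT
    refine ⟨fun x y h => h.1, ?_, ?_⟩
    · intro Y hY x hx y hy
      constructor
      · intro h
        have hconnP : Relation.ReflTransGen
            (fun a b => (rT a b ∧ rQ a b) ∨ (rT b a ∧ rQ b a)) x y := by
          refine Relation.ReflTransGen.mono ?_ _ _ (hY x hx y hy)
          rintro a b ⟨_, _, hab⟩
          exact hab
        have hconnQ : Relation.ReflTransGen (fun a b => rQ a b ∨ rQ b a) x y := by
          refine Relation.ReflTransGen.mono ?_ _ _ hconnP
          rintro a b (h | h)
          · exact Or.inl h.2
          · exact Or.inr h.2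
        exact ⟨h, B1 x y (Relation.TransGen.single (Or.inl h)) hconnQ⟩
      · exact fun h => h.1
    · intro x y
      constructor
      · intro h
        have m : ∀ u v, Relation.TransGen (fun a b => rT a b ∨ (rT b a ∧ rQ b a)) u v →
            QuotRel (QuotRel rT rT') rQ u v := by
          intro u v hu
          refine Relation.TransGen.mono ?_ _ _ hu
          rintro a b (h | h)
          · exact Or.inl (Relation.TransGen.single (Or.inl h))
          · exact Or.inr h.2
        have hconnQ := (B2 x y).mp ⟨m _ _ h.1, m _ _ h.2⟩
        exact (mySimQuotSelf rPrefl).mpr (connQtoP x y hconnQ)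
      · intro h
        have hconn : Relation.ReflTransGen
            (fun a b => (rT a b ∧ rQ a b) ∨ (rT b a ∧ rQ b a)) x y :=
          (mySimQuotSelf rPrefl).mp h
        have build : ∀ v, Relation.ReflTransGen
            (fun a b => (rT a b ∧ rQ a b) ∨ (rT b a ∧ rQ b a)) x v →
            Sim (QuotRel rT (fun a b => rT a b ∧ rQ a b)) x v := by
          intro v hv
          induction hv with
          | refl => exact ⟨Relation.TransGen.single (Or.inl (hT.1 x)),
              Relation.TransGen.single (Or.inl (hT.1 x))⟩
          | @tail b c _ hbc ih =>
            have st : Sim (QuotRel rT (fun a b => rT a b ∧ rQ a b)) b c := by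
              rcases hbc with h1 | h1
              · exact ⟨Relation.TransGen.single (Or.inl h1.1),
                  Relation.TransGen.single (Or.inr h1)⟩
              · exact ⟨Relation.TransGen.single (Or.inr h1),
                  Relation.TransGen.single (Or.inl h1.1)⟩
            exact ⟨ih.1.trans st.1, st.2.trans ih.2⟩
        exact build y hconn
  · -- uniqueness
    rintro rP' ⟨hpre', hT'P', hP'T, hadm1', hadm2', hquot'⟩
    funext u v
    apply propext
    constructor
    · intro h
      exact ⟨hP'T u v h, (hquot' u v).mp (Relation.TransGen.single (Or.inl h))⟩
    · rintro ⟨h1, h2⟩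
      have hq : QuotRel rP' rT' u v := (hquot' u v).mpr h2
      have hconn : Relation.ReflTransGen (fun a b => rP' a b ∨ rP' b a) u v := by
        refine Relation.TransGen.to_reflTransGen (Relation.TransGen.mono ?_ _ _ hq)
        rintro a b (h | h)
        · exact Or.inl h
        · exact Or.inr (hT'P' _ _ h)
      exact (hadm2'.2.1 _ (myConnectedIn_component rP' u) u .refl v hconn).mp h1
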